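/- arXiv:0905.4143 — 5 statements merged into one kernel-verified Lean document; each statement's English description precedes it below -/
import Mathlib

section
/- Let n ≥ 1 and let Q be an n×n matrix with entries in ℍ. Then every coefficient of the characteristic polynomial of the 2n×2n complex matrix Φ(Q) is a real number; in particular the characteristic polynomial of Φ(Q) is a monic polynomial of degree 2n with real coefficients. -/
/-- The standard embedding of the quaternions into `2 × 2` complex matrices:
`a + b i + c j + d k` is sent to `[[a + b i, c + d i], [-c + d i, a - b i]]`. -/
noncomputable def quatToMatrix (q : Quaternion ℝ) : Matrix (Fin 2) (Fin 2) ℂ :=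
  !![(⟨q.re, q.imI⟩ : ℂ), (⟨q.imJ, q.imK⟩ : ℂ);
     (⟨-q.imJ, q.imK⟩ : ℂ), (⟨q.re, -q.imI⟩ : ℂ)]

/-- The block embedding of `n × n` quaternionic matrices into `2n × 2n` complex matrices,
whose `2 × 2` block at position `(s, t)` is `φ (Q s t)`. -/
noncomputable def quatMatrixToMatrix {n : ℕ} (Q : Matrix (Fin n) (Fin n) (Quaternion ℝ)) :
    Matrix (Fin n × Fin 2) (Fin n × Fin 2) ℂ :=
  fun p r => quatToMatrix (Q p.1 r.1) p.2 r.2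

open Matrix Polynomial

/-- The characteristic polynomial is invariant under conjugation by an invertible matrix. -/
theorem charpoly_conj_aux {R : Type*} [CommRing R] {m : Type*} [DecidableEq m] [Fintype m]
    (P P' A : Matrix m m R) (h1 : P * P' = 1) (h2 : P' * P = 1) :
    (P * A * P').charpoly = A.charpoly := by
  have hc : charmatrix (P * A * P') =
      (P.map C) * charmatrix A * (P'.map C) := by
    have hP : (P.map C) * (P'.map C) = 1 := by
      rw [← Matrix.map_mul, h1]; simp
    simp only [charmatrix, RingHom.mapMatrix_apply]
    rw [Matrix.mul_sub, Matrix.sub_mul]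
    congr 1
    · rw [Matrix.mul_assoc, scalar_commute (X : R[X]) (fun r => Commute.all _ _) (P'.map C),
        ← Matrix.mul_assoc, hP, Matrix.one_mul]
    · simp [Matrix.map_mul, Matrix.mul_assoc]
  rw [charpoly, charpoly, hc, det_mul, det_mul, mul_comm, ← mul_assoc, ← det_mul,
    ← Matrix.map_mul, h2]
  simp

/-- The block-diagonal matrix with `2 × 2` diagonal blocks `[[0, 1], [-1, 0]]`. -/
noncomputable def Jmat (n : ℕ) : Matrix (Fin n × Fin 2) (Fin n × Fin 2) ℂ :=
  fun p r => if p.1 = r.1 then (!![0,1;-1,0] : Matrix (Fin 2) (Fin 2) ℂ) p.2 r.2 else 0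

theorem Jmat_mul_neg_Jmat (n : ℕ) : Jmat n * (-(Jmat n)) = 1 := by
  ext p r
  rcases p with ⟨p1, p2⟩; rcases r with ⟨r1, r2⟩
  simp only [Matrix.mul_apply, Matrix.neg_apply, Jmat, Fintype.sum_prod_type,
    mul_ite, mul_zero, mul_neg, ite_mul, zero_mul, mul_one]
  rw [Finset.sum_comm]
  by_cases h : p1 = r1
  · subst h
    fin_cases p2 <;> fin_cases r2 <;>
      simp [Finset.sum_ite_eq, Fin.sum_univ_two, Matrix.one_apply]
  · fin_cases p2 <;> fin_cases r2 <;>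
      simp [Finset.sum_ite_eq, Fin.sum_univ_two, Matrix.one_apply, h]

theorem neg_Jmat_mul_Jmat (n : ℕ) : (-(Jmat n)) * Jmat n = 1 := by
  have := Jmat_mul_neg_Jmat n
  calc (-(Jmat n)) * Jmat n = Jmat n * (-(Jmat n)) := by simp [mul_comm, Matrix.neg_mul,
        Matrix.mul_neg]
    _ = 1 := this

/-- Entrywise conjugation of `Φ(Q)` is conjugation by `J`. -/
theorem conj_quatMatrixToMatrix {n : ℕ} (Q : Matrix (Fin n) (Fin n) (Quaternion ℝ)) :
    (quatMatrixToMatrix Q).map (starRingEnd ℂ) =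
      Jmat n * quatMatrixToMatrix Q * (-(Jmat n)) := by
  ext p r
  rcases p with ⟨p1, p2⟩; rcases r with ⟨r1, r2⟩
  simp only [Matrix.map_apply, Matrix.mul_apply, Matrix.neg_apply, Jmat, Fintype.sum_prod_type,
    mul_ite, mul_zero, mul_neg, ite_mul, zero_mul, neg_mul, neg_neg]
  fin_cases p2 <;> fin_cases r2 <;>
    simp [Finset.sum_ite_eq, Finset.sum_ite_eq', Fin.sum_univ_two, quatMatrixToMatrix,
      quatToMatrix, Complex.ext_iff, Finset.mul_sum, Finset.sum_comm (γ := Fin n)]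

/-- **Characteristic polynomials of quaternionic matrices are real** (Section 1.3 of the
paper). For `n ≥ 1` and an `n × n` quaternionic matrix `Q`, every coefficient of the
characteristic polynomial of the `2n × 2n` complex matrix `Φ(Q)` is a real number; in
particular this characteristic polynomial is monic of degree `2n`. -/
theorem charpoly_quatMatrixToMatrix_real_monic_degree {n : ℕ} (hn : 1 ≤ n)
    (Q : Matrix (Fin n) (Fin n) (Quaternion ℝ)) :
    (∀ k : ℕ, ∃ r : ℝ, (Matrix.charpoly (quatMatrixToMatrix Q)).coeff k = (r : ℂ)) ∧
    (Matrix.charpoly (quatMatrixToMatrix Q)).Monic ∧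
    (Matrix.charpoly (quatMatrixToMatrix Q)).natDegree = 2 * n := by
  have hmap : (Matrix.charpoly (quatMatrixToMatrix Q)).map (starRingEnd ℂ) =
      Matrix.charpoly (quatMatrixToMatrix Q) := by
    rw [← Matrix.charpoly_map, conj_quatMatrixToMatrix,
      charpoly_conj_aux _ _ _ (Jmat_mul_neg_Jmat n) (neg_Jmat_mul_Jmat n)]
  refine ⟨?_, Matrix.charpoly_monic _, ?_⟩
  · intro k
    refine ⟨((Matrix.charpoly (quatMatrixToMatrix Q)).coeff k).re, ?_⟩
    have : (starRingEnd ℂ) ((Matrix.charpoly (quatMatrixToMatrix Q)).coeff k) =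
        (Matrix.charpoly (quatMatrixToMatrix Q)).coeff k := by
      conv_rhs => rw [← hmap]
      simp
    exact (Complex.conj_eq_iff_re.mp this).symm
  · rw [Matrix.charpoly_natDegree_eq_dim]
    simp [Fintype.card_prod, mul_comm]
end

section
/- Let n ≥ 1 and let Q be an invertible n×n matrix with entries in ℍ. Then the determinant of the 2n×2n complex matrix Φ(Q) is a positive real number. -/
lemma quatToMatrix_mul (p q : Quaternion ℝ) :
    quatToMatrix (p * q) = quatToMatrix p * quatToMatrix q := by
  ext a b
  fin_cases a <;> fin_cases b <;>
    · apply Complex.ext <;>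
        simp [quatToMatrix, Matrix.mul_apply, Fin.sum_univ_two, Complex.mul_re, Complex.mul_im,
          Quaternion.re_mul, Quaternion.imI_mul, Quaternion.imJ_mul, Quaternion.imK_mul] <;>
        ring

lemma quatToMatrix_one : quatToMatrix 1 = 1 := by
  ext a b
  fin_cases a <;> fin_cases b <;>
    · apply Complex.ext <;> simp [quatToMatrix, Matrix.one_apply, Quaternion.re_one, Quaternion.imI_one,
        Quaternion.imJ_one, Quaternion.imK_one]

lemma quatToMatrix_zero : quatToMatrix 0 = 0 := by
  ext a b
  fin_cases a <;> fin_cases b <;>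
    · apply Complex.ext <;> simp [quatToMatrix, Quaternion.re_zero, Quaternion.imI_zero,
        Quaternion.imJ_zero, Quaternion.imK_zero]

lemma quatToMatrix_add (p q : Quaternion ℝ) :
    quatToMatrix (p + q) = quatToMatrix p + quatToMatrix q := by
  ext a b
  fin_cases a <;> fin_cases b <;>
    · apply Complex.ext <;> simp [quatToMatrix] <;> ring

lemma det_quatToMatrix (q : Quaternion ℝ) :
    (quatToMatrix q).det = ((Quaternion.normSq q : ℝ) : ℂ) := by
  apply Complex.ext <;>
    simp [quatToMatrix, Matrix.det_fin_two, Complex.mul_re, Complex.mul_im,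
      Quaternion.normSq_def', ← Complex.ofReal_pow] <;> ring

lemma quatToMatrix_sum {ι : Type*} (s : Finset ι) (g : ι → Quaternion ℝ) :
    quatToMatrix (∑ i ∈ s, g i) = ∑ i ∈ s, quatToMatrix (g i) := by
  classical
  induction s using Finset.induction_on with
  | empty => simp [quatToMatrix_zero]
  | insert _ _ h ih => simp [Finset.sum_insert h, quatToMatrix_add, ih]

lemma quatMatrixToMatrix_one {n : ℕ} :
    quatMatrixToMatrix (1 : Matrix (Fin n) (Fin n) (Quaternion ℝ)) = 1 := by
  ext ⟨i, a⟩ ⟨j, b⟩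
  by_cases h : i = j
  · subst h
    simp [quatMatrixToMatrix, Matrix.one_apply, quatToMatrix_one]
  · simp [quatMatrixToMatrix, Matrix.one_apply, h, quatToMatrix_zero, Prod.ext_iff]

lemma quatMatrixToMatrix_mul {n : ℕ} (M N : Matrix (Fin n) (Fin n) (Quaternion ℝ)) :
    quatMatrixToMatrix (M * N) = quatMatrixToMatrix M * quatMatrixToMatrix N := by
  ext ⟨i, a⟩ ⟨j, b⟩
  simp only [quatMatrixToMatrix, Matrix.mul_apply, Fintype.sum_prod_type, quatToMatrix_sum,
    quatToMatrix_mul, Matrix.sum_apply]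

/-- The equivalence between `Fin 2` and the `i = 0` block indices. -/
def eBlock0 {m : ℕ} : Fin 2 ≃ {x : Fin (m + 1) × Fin 2 // x.1 = 0} where
  toFun a := ⟨(0, a), rfl⟩
  invFun x := x.1.2
  left_inv a := rfl
  right_inv x := by
    obtain ⟨⟨i, a⟩, h⟩ := x
    simp only at h
    subst h
    rfl

/-- The equivalence between `Fin m × Fin 2` and the `i ≠ 0` block indices. -/
def eBlock1 {m : ℕ} : Fin m × Fin 2 ≃ {x : Fin (m + 1) × Fin 2 // ¬ x.1 = 0} where
  toFun p := ⟨(p.1.succ, p.2), Fin.succ_ne_zero _⟩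
  invFun x := (x.1.1.pred x.2, x.1.2)
  left_inv p := by simp
  right_inv x := by
    obtain ⟨⟨i, a⟩, h⟩ := x
    simp [Fin.succ_pred]

lemma det_block0 {m : ℕ} (M : Matrix (Fin (m + 1)) (Fin (m + 1)) (Quaternion ℝ)) :
    ((quatMatrixToMatrix M).toSquareBlockProp (fun p => p.1 = 0)).det
      = (quatToMatrix (M 0 0)).det := by
  have : (quatMatrixToMatrix M).toSquareBlockProp (fun p => p.1 = 0)
      = (quatToMatrix (M 0 0)).submatrix eBlock0.symm eBlock0.symm := by
    ext x y
    obtain ⟨⟨i, a⟩, hx⟩ := x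
    obtain ⟨⟨j, b⟩, hy⟩ := y
    simp only at hx hy
    subst hx; subst hy
    rfl
  rw [this, Matrix.det_submatrix_equiv_self]

lemma det_block1 {m : ℕ} (M : Matrix (Fin (m + 1)) (Fin (m + 1)) (Quaternion ℝ)) :
    ((quatMatrixToMatrix M).toSquareBlockProp (fun p => ¬ p.1 = 0)).det
      = (quatMatrixToMatrix (M.submatrix Fin.succ Fin.succ)).det := by
  have : (quatMatrixToMatrix M).toSquareBlockProp (fun p => ¬ p.1 = 0)
      = (quatMatrixToMatrix (M.submatrix Fin.succ Fin.succ)).submatrix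
          eBlock1.symm eBlock1.symm := by
    ext x y
    obtain ⟨⟨i, a⟩, hx⟩ := x
    obtain ⟨⟨j, b⟩, hy⟩ := y
    simp [Matrix.toSquareBlockProp, quatMatrixToMatrix, eBlock1, Fin.succ_pred]
  rw [this, Matrix.det_submatrix_equiv_self]

lemma detB {m : ℕ} (M : Matrix (Fin (m + 1)) (Fin (m + 1)) (Quaternion ℝ))
    (h : ∀ i, i ≠ 0 → M i 0 = 0) :
    (quatMatrixToMatrix M).det =
      (quatToMatrix (M 0 0)).det *
        (quatMatrixToMatrix (M.submatrix Fin.succ Fin.succ)).det := by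
  rw [Matrix.twoBlockTriangular_det (quatMatrixToMatrix M) (fun p => p.1 = 0)
    (fun i hi j hj => by
      show quatToMatrix (M i.1 j.1) i.2 j.2 = 0
      rw [hj, h i.1 hi, quatToMatrix_zero]
      rfl),
    det_block0, det_block1]

lemma detB' {m : ℕ} (M : Matrix (Fin (m + 1)) (Fin (m + 1)) (Quaternion ℝ))
    (h : ∀ j, j ≠ 0 → M 0 j = 0) :
    (quatMatrixToMatrix M).det =
      (quatToMatrix (M 0 0)).det *
        (quatMatrixToMatrix (M.submatrix Fin.succ Fin.succ)).det := by
  rw [Matrix.twoBlockTriangular_det' (quatMatrixToMatrix M) (fun p => p.1 = 0)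
    (fun i hi j hj => by
      show quatToMatrix (M i.1 j.1) i.2 j.2 = 0
      rw [hi, h j.1 hj, quatToMatrix_zero]
      rfl),
    det_block0, det_block1]

/-- Elementary matrix with extra entries in column `0`. -/
noncomputable def colElim {m : ℕ} (c : Fin (m + 1) → Quaternion ℝ) :
    Matrix (Fin (m + 1)) (Fin (m + 1)) (Quaternion ℝ) :=
  Matrix.of fun i j => if i = j then 1 else if j = 0 then c i else 0

/-- Elementary matrix with extra entries in row `0`. -/
noncomputable def rowElim {m : ℕ} (r : Fin (m + 1) → Quaternion ℝ) :
    Matrix (Fin (m + 1)) (Fin (m + 1)) (Quaternion ℝ) :=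
  Matrix.of fun i j => if i = j then 1 else if i = 0 then r j else 0

lemma colElim_apply_split {m : ℕ} {c : Fin (m + 1) → Quaternion ℝ} (hc : c 0 = 0) (i k) :
    colElim c i k = (if i = k then 1 else 0) + (if k = 0 then c i else 0) := by
  by_cases h1 : i = k
  · subst h1
    by_cases h2 : i = 0
    · subst h2; simp [colElim, hc]
    · simp [colElim, h2]
  · by_cases h2 : k = 0
    · subst h2; simp [colElim, h1]
    · simp [colElim, h1, h2]

lemma rowElim_apply_split {m : ℕ} {r : Fin (m + 1) → Quaternion ℝ} (hr : r 0 = 0) (i k) :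
    rowElim r i k = (if i = k then 1 else 0) + (if i = 0 then r k else 0) := by
  by_cases h1 : i = k
  · subst h1
    by_cases h2 : i = 0
    · subst h2; simp [rowElim, hr]
    · simp [rowElim, h2]
  · by_cases h2 : i = 0
    · subst h2; simp [rowElim, h1]
    · simp [rowElim, h1, h2]

lemma colElim_mul {m : ℕ} (c : Fin (m + 1) → Quaternion ℝ) (hc : c 0 = 0)
    (X : Matrix (Fin (m + 1)) (Fin (m + 1)) (Quaternion ℝ)) :
    colElim c * X = X + Matrix.of fun i j => c i * X 0 j := by
  ext i j : 1
  simp only [Matrix.mul_apply, colElim_apply_split hc, add_mul, Finset.sum_add_distrib,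
    ite_mul, one_mul, zero_mul, Matrix.add_apply, Matrix.of_apply]
  simp

lemma mul_rowElim {m : ℕ} (r : Fin (m + 1) → Quaternion ℝ) (hr : r 0 = 0)
    (X : Matrix (Fin (m + 1)) (Fin (m + 1)) (Quaternion ℝ)) :
    X * rowElim r = X + Matrix.of fun i j => X i 0 * r j := by
  ext i j : 1
  simp only [Matrix.mul_apply, rowElim_apply_split hr, mul_add, Finset.sum_add_distrib,
    mul_ite, mul_one, mul_zero, Matrix.add_apply, Matrix.of_apply]
  simp

lemma mul_colElim {m : ℕ} (c : Fin (m + 1) → Quaternion ℝ) (hc : c 0 = 0)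
    (X : Matrix (Fin (m + 1)) (Fin (m + 1)) (Quaternion ℝ)) :
    X * colElim c = X + Matrix.of fun i j => if j = 0 then ∑ k, X i k * c k else 0 := by
  ext i j : 1
  simp only [Matrix.mul_apply, colElim_apply_split hc, mul_add, Finset.sum_add_distrib,
    mul_ite, mul_one, mul_zero, Matrix.add_apply, Matrix.of_apply]
  simp [Finset.sum_ite_eq']

lemma colElim_zero_apply {m : ℕ} {c : Fin (m + 1) → Quaternion ℝ} (hc : c 0 = 0) (j) :
    colElim c 0 j = if (0 : Fin (m + 1)) = j then 1 else 0 := by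
  by_cases h : (0 : Fin (m + 1)) = j
  · subst h; simp [colElim]
  · have h2 : ¬ j = 0 := fun h' => h h'.symm
    simp [colElim, h, h2]

lemma rowElim_apply_zero {m : ℕ} {r : Fin (m + 1) → Quaternion ℝ} (hr : r 0 = 0) (i) :
    rowElim r i 0 = if i = (0 : Fin (m + 1)) then 1 else 0 := by
  by_cases h : i = (0 : Fin (m + 1)) <;> simp [rowElim, h, hr]

lemma colElim_mul_colElim_neg {m : ℕ} (c : Fin (m + 1) → Quaternion ℝ) (hc : c 0 = 0) :
    colElim c * colElim (fun i => -(c i)) = 1 := by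
  have hc' : (fun i => -(c i)) (0 : Fin (m + 1)) = 0 := by simp [hc]
  ext i j : 1
  rw [colElim_mul c hc]
  simp only [Matrix.add_apply, Matrix.of_apply,
    colElim_zero_apply (c := fun i => -(c i)) hc']
  by_cases h1 : i = j
  · subst h1
    by_cases h2 : i = 0
    · subst h2; simp [colElim, hc, Matrix.one_apply]
    · have h3 : ¬ (0 : Fin (m + 1)) = i := fun h' => h2 h'.symm
      simp [colElim, h2, h3, Matrix.one_apply]
  · by_cases h2 : j = 0
    · subst h2
      simp [colElim, h1, Matrix.one_apply]
    · have h3 : ¬ (0 : Fin (m + 1)) = j := fun h' => h2 h'.symm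
      simp [colElim, h1, h2, h3, Matrix.one_apply]

lemma colElim_isUnit {m : ℕ} (c : Fin (m + 1) → Quaternion ℝ) (hc : c 0 = 0) :
    IsUnit (colElim c) := by
  have hc' : (fun i => -(c i)) (0 : Fin (m + 1)) = 0 := by simp [hc]
  have h2 := colElim_mul_colElim_neg (fun i => -(c i)) hc'
  simp only [neg_neg] at h2
  exact ⟨⟨colElim c, colElim (fun i => -(c i)), colElim_mul_colElim_neg c hc, h2⟩, rfl⟩

lemma rowElim_neg_mul_rowElim {m : ℕ} (r : Fin (m + 1) → Quaternion ℝ) (hr : r 0 = 0) :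
    rowElim (fun j => -(r j)) * rowElim r = 1 := by
  have hr' : (fun j => -(r j)) (0 : Fin (m + 1)) = 0 := by simp [hr]
  ext i j : 1
  rw [mul_rowElim r hr]
  simp only [Matrix.add_apply, Matrix.of_apply,
    rowElim_apply_zero (r := fun j => -(r j)) hr']
  by_cases h1 : i = j
  · subst h1
    by_cases h2 : i = 0
    · subst h2; simp [rowElim, hr, Matrix.one_apply]
    · simp [rowElim, h2, Matrix.one_apply]
  · by_cases h2 : i = 0
    · subst h2
      simp [rowElim, h1, Matrix.one_apply]
    · simp [rowElim, h1, h2, Matrix.one_apply]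

lemma rowElim_isUnit {m : ℕ} (r : Fin (m + 1) → Quaternion ℝ) (hr : r 0 = 0) :
    IsUnit (rowElim r) := by
  have hr' : (fun j => -(r j)) (0 : Fin (m + 1)) = 0 := by simp [hr]
  have h2 := rowElim_neg_mul_rowElim (fun j => -(r j)) hr'
  simp only [neg_neg] at h2
  exact ⟨⟨rowElim r, rowElim (fun j => -(r j)), h2, rowElim_neg_mul_rowElim r hr⟩, rfl⟩

lemma colElim_minor {m : ℕ} (c : Fin (m + 1) → Quaternion ℝ) :
    (colElim c).submatrix Fin.succ Fin.succ = 1 := by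
  ext i j : 1
  by_cases h : i = j
  · subst h; simp [colElim, Matrix.one_apply]
  · have h2 : ¬ (Fin.succ i = Fin.succ j) := by simp [Fin.succ_inj, h]
    simp [colElim, h2, Fin.succ_ne_zero, Matrix.one_apply, h]

lemma rowElim_minor {m : ℕ} (r : Fin (m + 1) → Quaternion ℝ) :
    (rowElim r).submatrix Fin.succ Fin.succ = 1 := by
  ext i j : 1
  by_cases h : i = j
  · subst h; simp [rowElim, Matrix.one_apply]
  · have h2 : ¬ (Fin.succ i = Fin.succ j) := by simp [Fin.succ_inj, h]
    simp [rowElim, h2, Fin.succ_ne_zero, Matrix.one_apply, h]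

lemma det_phi_one {m : ℕ} :
    (quatMatrixToMatrix (1 : Matrix (Fin m) (Fin m) (Quaternion ℝ))).det = 1 := by
  rw [quatMatrixToMatrix_one, Matrix.det_one]

lemma det_phi_colElim {m : ℕ} (c : Fin (m + 1) → Quaternion ℝ) (hc : c 0 = 0) :
    (quatMatrixToMatrix (colElim c)).det = 1 := by
  rw [detB' (colElim c) (fun j hj => by
    have h3 : ¬ (0 : Fin (m + 1)) = j := fun h' => hj h'.symm
    simp [colElim, h3, hj])]
  rw [colElim_minor, det_phi_one, mul_one]
  have : colElim c 0 0 = 1 := by simp [colElim]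
  rw [this, quatToMatrix_one, Matrix.det_one]

lemma det_phi_rowElim {m : ℕ} (r : Fin (m + 1) → Quaternion ℝ) (hr : r 0 = 0) :
    (quatMatrixToMatrix (rowElim r)).det = 1 := by
  rw [detB (rowElim r) (fun i hi => by simp [rowElim, hi, hr])]
  rw [rowElim_minor, det_phi_one, mul_one]
  have : rowElim r 0 0 = 1 := by simp [rowElim]
  rw [this, quatToMatrix_one, Matrix.det_one]

lemma minor_isUnit {m : ℕ} (N : Matrix (Fin (m + 1)) (Fin (m + 1)) (Quaternion ℝ))
    (hNu : IsUnit N) (hcol : ∀ i, i ≠ 0 → N i 0 = 0) (hrow : ∀ j, j ≠ 0 → N 0 j = 0) :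
    IsUnit (N.submatrix Fin.succ Fin.succ) := by
  obtain ⟨u, hu⟩ := hNu
  set V : Matrix (Fin (m + 1)) (Fin (m + 1)) (Quaternion ℝ) := Units.val u⁻¹ with hV
  have h1 : N * V = 1 := by rw [hV, ← hu]; exact u.mul_inv
  have h2 : V * N = 1 := by rw [hV, ← hu]; exact u.inv_mul
  refine ⟨⟨N.submatrix Fin.succ Fin.succ, V.submatrix Fin.succ Fin.succ, ?_, ?_⟩, rfl⟩
  · ext i j : 1
    have e1 : (N * V) (Fin.succ i) (Fin.succ j)
        = (1 : Matrix (Fin (m + 1)) (Fin (m + 1)) (Quaternion ℝ)) (Fin.succ i) (Fin.succ j) := by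
      rw [h1]
    rw [Matrix.mul_apply, Fin.sum_univ_succ, hcol _ (Fin.succ_ne_zero i), zero_mul,
      zero_add] at e1
    rw [Matrix.mul_apply]
    simp only [Matrix.submatrix_apply]
    rw [e1]
    simp [Matrix.one_apply, Fin.succ_inj]
  · ext i j : 1
    have e1 : (V * N) (Fin.succ i) (Fin.succ j)
        = (1 : Matrix (Fin (m + 1)) (Fin (m + 1)) (Quaternion ℝ)) (Fin.succ i) (Fin.succ j) := by
      rw [h2]
    rw [Matrix.mul_apply, Fin.sum_univ_succ, hrow _ (Fin.succ_ne_zero j), mul_zero,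
      zero_add] at e1
    rw [Matrix.mul_apply]
    simp only [Matrix.submatrix_apply]
    rw [e1]
    simp [Matrix.one_apply, Fin.succ_inj]

lemma step {m : ℕ}
    (IH : ∀ S : Matrix (Fin m) (Fin m) (Quaternion ℝ), IsUnit S →
      ∃ r : ℝ, 0 < r ∧ (quatMatrixToMatrix S).det = (r : ℂ))
    (M : Matrix (Fin (m + 1)) (Fin (m + 1)) (Quaternion ℝ)) (hM : IsUnit M)
    (h00 : M 0 0 ≠ 0) :
    ∃ r : ℝ, 0 < r ∧ (quatMatrixToMatrix M).det = (r : ℂ) := by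
  classical
  obtain ⟨c, hc0, hcM⟩ :
      ∃ c : Fin (m + 1) → Quaternion ℝ, c 0 = 0 ∧ ∀ i, i ≠ 0 → c i * M 0 0 = -(M i 0) :=
    ⟨fun i => if i = 0 then 0 else -(M i 0) * (M 0 0)⁻¹, by simp,
      fun i hi => by simp only [if_neg hi]; rw [mul_assoc, inv_mul_cancel₀ h00, mul_one]⟩
  obtain ⟨rr, hr0, hrM⟩ :
      ∃ rr : Fin (m + 1) → Quaternion ℝ, rr 0 = 0 ∧ ∀ j, j ≠ 0 → M 0 0 * rr j = -(M 0 j) :=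
    ⟨fun j => if j = 0 then 0 else -((M 0 0)⁻¹ * M 0 j), by simp,
      fun j hj => by
        simp only [if_neg hj, mul_neg, ← mul_assoc, mul_inv_cancel₀ h00, one_mul]⟩
  have hNe : ∀ i j, (colElim c * M * rowElim rr) i j
      = M i j + c i * M 0 j + (M i 0 + c i * M 0 0) * rr j := by
    intro i j
    rw [mul_rowElim rr hr0, colElim_mul c hc0]
    simp [Matrix.add_apply]
  have hcol : ∀ i, i ≠ 0 → (colElim c * M * rowElim rr) i 0 = 0 := by
    intro i hi
    rw [hNe i 0, hcM i hi, hr0, mul_zero, add_zero, add_neg_cancel]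
  have hrow : ∀ j, j ≠ 0 → (colElim c * M * rowElim rr) 0 j = 0 := by
    intro j hj
    rw [hNe 0 j, hc0, zero_mul, add_zero, zero_mul, add_zero, hrM j hj, add_neg_cancel]
  have h00N : (colElim c * M * rowElim rr) 0 0 = M 0 0 := by
    rw [hNe 0 0, hc0, hr0]; simp
  have hLu := colElim_isUnit c hc0
  have hRu := rowElim_isUnit rr hr0
  have hNu : IsUnit (colElim c * M * rowElim rr) := (hLu.mul hM).mul hRu
  obtain ⟨r', hr'pos, hr'⟩ := IH _ (minor_isUnit _ hNu hcol hrow)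
  have hfN : (quatMatrixToMatrix (colElim c * M * rowElim rr)).det
      = (quatMatrixToMatrix M).det := by
    rw [quatMatrixToMatrix_mul, quatMatrixToMatrix_mul, Matrix.det_mul, Matrix.det_mul,
      det_phi_colElim c hc0, det_phi_rowElim rr hr0, one_mul, mul_one]
  have hfN2 : (quatMatrixToMatrix (colElim c * M * rowElim rr)).det
      = ((Quaternion.normSq (M 0 0) * r' : ℝ) : ℂ) := by
    rw [detB _ hcol, h00N, det_quatToMatrix, hr']
    push_cast
    ring
  exact ⟨Quaternion.normSq (M 0 0) * r',
    mul_pos (lt_of_le_of_ne Quaternion.normSq_nonneg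
      (Ne.symm (Quaternion.normSq_ne_zero.mpr h00))) hr'pos,
    by rw [← hfN, hfN2]⟩

lemma main_aux : ∀ (m : ℕ) (M : Matrix (Fin m) (Fin m) (Quaternion ℝ)), IsUnit M →
    ∃ r : ℝ, 0 < r ∧ (quatMatrixToMatrix M).det = (r : ℂ) := by
  intro m
  induction m with
  | zero =>
    intro M _
    exact ⟨1, one_pos, by simp [Matrix.det_isEmpty]⟩
  | succ m IH =>
    intro M hM
    by_cases h00 : M 0 0 ≠ 0
    · exact step IH M hM h00
    · push_neg at h00
      obtain ⟨u, hu⟩ := hM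
      have h1 : M * Units.val u⁻¹ = 1 := by rw [← hu]; exact u.mul_inv
      have hex : ∃ k, M 0 k ≠ 0 := by
        by_contra h
        push_neg at h
        have e : ∑ j, M 0 j * Units.val u⁻¹ j 0 = (1 : Matrix _ _ _) 0 0 := by
          rw [← Matrix.mul_apply, h1]
          rfl
        rw [Matrix.one_apply_eq] at e
        have e2 : ∑ j, M 0 j * Units.val u⁻¹ j 0 = 0 :=
          Finset.sum_eq_zero fun j _ => by rw [h j, zero_mul]
        rw [e2] at e
        exact zero_ne_one e
      obtain ⟨k, hk⟩ := hex
      have hk0 : k ≠ 0 := fun h => hk (h ▸ h00)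
      obtain ⟨cc, hcc0, hccsum⟩ :
          ∃ cc : Fin (m + 1) → Quaternion ℝ, cc 0 = 0 ∧
            ∀ i, (∑ k', M i k' * cc k') = M i k :=
        ⟨fun i => if i = k then 1 else 0,
          by simp only [if_neg (fun h : (0 : Fin (m + 1)) = k => hk0 h.symm)],
          fun i => by simp [mul_ite, Finset.sum_ite_eq']⟩
      have hM'u : IsUnit (M * colElim cc) :=
        IsUnit.mul ⟨u, hu⟩ (colElim_isUnit cc hcc0)
      have hM00 : (M * colElim cc) 0 0 = M 0 k := by
        rw [mul_colElim cc hcc0]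
        simp [Matrix.add_apply, h00, hccsum 0]
      obtain ⟨r, hrpos, hr⟩ := step IH _ hM'u (by rw [hM00]; exact hk)
      refine ⟨r, hrpos, ?_⟩
      rw [quatMatrixToMatrix_mul, Matrix.det_mul, det_phi_colElim cc hcc0,
        mul_one] at hr
      exact hr


/-- **The reduced norm of `GL(n, ℍ)` takes values in `ℝ₊ˣ`** (Section 1.1 of the paper).
For `n ≥ 1` and an invertible `n × n` quaternionic matrix `Q`, the determinant of the
`2n × 2n` complex matrix `Φ(Q)` is a positive real number. -/
theorem det_quatMatrixToMatrix_pos_real {n : ℕ} (hn : 1 ≤ n)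
    (Q : Matrix (Fin n) (Fin n) (Quaternion ℝ)) (hQ : IsUnit Q) :
    ∃ r : ℝ, 0 < r ∧ (quatMatrixToMatrix Q).det = (r : ℂ) :=
  main_aux n Q hQ
end

section
/- Let n ≥ 1 and let p be a monic real polynomial of degree 2n such that p, viewed over ℂ, has 2n distinct complex roots. Then p has no real root if and only if there exists an invertible n×n matrix Q with entries in ℍ such that the characteristic polynomial of the 2n×2n complex matrix Φ(Q) equals the image of p under the inclusion ℝ[X] → ℂ[X]. -/
section QtmHelpers

open Polynomial Matrix Complex

variable {κ : Type*} [Fintype κ] [DecidableEq κ]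

lemma qtm_charpoly_diagonal (d : κ → ℂ) :
    (Matrix.diagonal d).charpoly = ∏ i, (X - C (d i)) := by
  have h : (Matrix.diagonal d).charmatrix = Matrix.diagonal (fun i => X - C (d i)) := by
    ext i j
    by_cases hij : i = j <;>
      simp [charmatrix_apply, Matrix.diagonal_apply, hij]
  rw [Matrix.charpoly, h, Matrix.det_diagonal]

lemma qtm_eval_charpoly (M : Matrix κ κ ℂ) (z : ℂ) :
    M.charpoly.eval z = (Matrix.diagonal (fun _ => z) - M).det := by
  rw [Matrix.charpoly]
  have h2 := RingHom.map_det (evalRingHom z) M.charmatrix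
  simp only [coe_evalRingHom] at h2
  rw [h2]
  congr 1
  ext i j
  by_cases hij : i = j <;> simp [charmatrix_apply, Matrix.diagonal_apply, hij]

def qtmJ {n : ℕ} (v : Fin n × Fin 2 → ℂ) : Fin n × Fin 2 → ℂ :=
  fun p => if p.2 = 0 then -(starRingEnd ℂ) (v (p.1, 1)) else (starRingEnd ℂ) (v (p.1, 0))

lemma qtmJ_J {n : ℕ} (v : Fin n × Fin 2 → ℂ) : qtmJ (qtmJ v) = -v := by
  funext ⟨i, a⟩
  fin_cases a <;> simp [qtmJ]

lemma qtmJ_smul {n : ℕ} (c : ℂ) (v : Fin n × Fin 2 → ℂ) :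
    qtmJ (c • v) = (starRingEnd ℂ) c • qtmJ v := by
  funext ⟨i, a⟩
  fin_cases a <;> simp [qtmJ, mul_comm]

lemma qtm_mulVec_J {n : ℕ} (B : Matrix (Fin n) (Fin n) (Quaternion ℝ)) (v : Fin n × Fin 2 → ℂ) :
    (quatMatrixToMatrix B) *ᵥ (qtmJ v) = qtmJ ((quatMatrixToMatrix B) *ᵥ v) := by
  funext ⟨i, a⟩
  have expand : ∀ (u : Fin n × Fin 2 → ℂ) (b : Fin 2),
      ((quatMatrixToMatrix B) *ᵥ u) (i, b) =
        ∑ j, (quatToMatrix (B i j) b 0 * u (j, 0) + quatToMatrix (B i j) b 1 * u (j, 1)) := by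
    intro u b
    simp [Matrix.mulVec, dotProduct, Fintype.sum_prod_type, quatMatrixToMatrix,
      Fin.sum_univ_two]
  fin_cases a
  · show ((quatMatrixToMatrix B) *ᵥ qtmJ v) (i, 0) = qtmJ ((quatMatrixToMatrix B) *ᵥ v) (i, 0)
    rw [expand]
    show _ = -(starRingEnd ℂ) (((quatMatrixToMatrix B) *ᵥ v) (i, 1))
    rw [expand, map_sum, ← Finset.sum_neg_distrib]
    refine Finset.sum_congr rfl fun j _ => ?_
    show quatToMatrix (B i j) 0 0 * qtmJ v (j, 0) + quatToMatrix (B i j) 0 1 * qtmJ v (j, 1) = _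
    simp only [qtmJ, quatToMatrix]
    norm_num [Matrix.cons_val_zero, Matrix.cons_val_one]
    apply Complex.ext <;> simp [Complex.mul_re, Complex.mul_im] <;> ring
  · show ((quatMatrixToMatrix B) *ᵥ qtmJ v) (i, 1) = qtmJ ((quatMatrixToMatrix B) *ᵥ v) (i, 1)
    rw [expand]
    show _ = (starRingEnd ℂ) (((quatMatrixToMatrix B) *ᵥ v) (i, 0))
    rw [expand, map_sum]
    refine Finset.sum_congr rfl fun j _ => ?_
    show quatToMatrix (B i j) 1 0 * qtmJ v (j, 0) + quatToMatrix (B i j) 1 1 * qtmJ v (j, 1) = _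
    simp only [qtmJ, quatToMatrix]
    norm_num [Matrix.cons_val_zero, Matrix.cons_val_one]
    apply Complex.ext <;> simp [Complex.mul_re, Complex.mul_im] <;> ring

lemma qtm_backward {n : ℕ} (hn : 1 ≤ n) (p : Polynomial ℝ) (hmonic : p.Monic)
    (hdeg : p.natDegree = 2 * n)
    (hroots : (p.map (algebraMap ℝ ℂ)).roots.toFinset.card = 2 * n)
    (Q : Matrix (Fin n) (Fin n) (Quaternion ℝ))
    (hc : Matrix.charpoly (quatMatrixToMatrix Q) = p.map (algebraMap ℝ ℂ))
    (x : ℝ) : p.eval x ≠ 0 := by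
  intro hx
  set pm := p.map (algebraMap ℝ ℂ) with hpm
  set M := quatMatrixToMatrix Q with hM
  have hpm_monic : pm.Monic := hmonic.map _
  have hpm_deg : pm.natDegree = 2 * n := by
    rw [hpm, Monic.natDegree_map hmonic, hdeg]
  have hsplits : Splits pm := IsAlgClosed.splits pm
  have hcard : Multiset.card pm.roots = 2 * n := by
    rw [(splits_iff_card_roots).mp hsplits, hpm_deg]
  have hnodup : pm.roots.Nodup := by
    rw [← Multiset.toFinset_card_eq_card_iff_nodup]
    rw [hroots, hcard]
  -- x is a root
  have hxr : (x : ℂ) ∈ pm.roots := by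
    rw [mem_roots (hpm_monic.ne_zero)]
    show pm.eval _ = 0
    have : ((x : ℝ) : ℂ) = algebraMap ℝ ℂ x := rfl
    rw [this, hpm, eval_map, Polynomial.eval₂_at_apply, hx, map_zero]
  -- eigenvectors for every root
  have heig : ∀ z : ℂ, z ∈ pm.roots.toFinset →
      ∃ v : Fin n × Fin 2 → ℂ, v ≠ 0 ∧ M *ᵥ v = z • v := by
    intro z hz
    have hz' : pm.eval z = 0 := by
      rw [Multiset.mem_toFinset, mem_roots hpm_monic.ne_zero] at hz
      exact hz
    have hdet : (Matrix.diagonal (fun _ : Fin n × Fin 2 => z) - M).det = 0 := by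
      rw [← qtm_eval_charpoly, hc, hz']
    obtain ⟨v, hv0, hv⟩ := (Matrix.exists_mulVec_eq_zero_iff).mpr hdet
    refine ⟨v, hv0, ?_⟩
    have h1 : (Matrix.diagonal (fun _ : Fin n × Fin 2 => z) - M) *ᵥ v
        = Matrix.diagonal (fun _ => z) *ᵥ v - M *ᵥ v := Matrix.sub_mulVec _ _ _
    have h2 : Matrix.diagonal (fun _ : Fin n × Fin 2 => z) *ᵥ v = z • v := by
      funext i; simp [Matrix.mulVec_diagonal]
    rw [h1, h2] at hv
    linear_combination (norm := module) -hv
  classical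
  set ι := {z : ℂ // z ∈ pm.roots.toFinset} with hι
  choose u hu0 hu using fun z : ι => heig z.1 z.2
  have hli : LinearIndependent ℂ u := by
    apply Module.End.eigenvectors_linearIndependent' (Matrix.mulVecLin M)
      (fun z : ι => (z : ℂ)) Subtype.val_injective
    intro z
    refine ⟨Module.End.mem_eigenspace_iff.mpr ?_, hu0 z⟩
    simp only [Matrix.mulVecLin_apply]
    exact hu z
  have hcardι : Fintype.card ι = Module.finrank ℂ (Fin n × Fin 2 → ℂ) := by
    rw [Module.finrank_fintype_fun_eq_card, Fintype.card_prod, Fintype.card_fin, Fintype.card_fin]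
    rw [Fintype.card_coe, hroots]
    ring
  have : Nonempty ι := ⟨⟨(x : ℂ), Multiset.mem_toFinset.mpr hxr⟩⟩
  set b := basisOfLinearIndependentOfCardEqFinrank hli hcardι with hb
  have hbu : ∀ z : ι, b z = u z := fun z =>
    congrFun (coe_basisOfLinearIndependentOfCardEqFinrank hli hcardι) z
  set l0 : ι := ⟨(x : ℂ), Multiset.mem_toFinset.mpr hxr⟩ with hl0
  -- every x-eigenvector is a multiple of u l0
  have key : ∀ v : Fin n × Fin 2 → ℂ, M *ᵥ v = (x : ℂ) • v → v = b.repr v l0 • u l0 := by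
    intro v hv
    have hv_sum : v = ∑ z : ι, b.repr v z • u z := by
      conv_lhs => rw [← b.sum_repr v]
      exact Finset.sum_congr rfl fun z _ => by rw [hbu]
    have happ : ∑ z : ι, (b.repr v z * z) • u z = ∑ z : ι, ((x : ℂ) * b.repr v z) • u z := by
      have h1 : M *ᵥ v = ∑ z : ι, (b.repr v z * z) • u z := by
        conv_lhs => rw [hv_sum]
        rw [show M *ᵥ (∑ z : ι, b.repr v z • u z) = Matrix.mulVecLin M (∑ z : ι, b.repr v z • u z) from rfl]
        rw [map_sum]
        refine Finset.sum_congr rfl fun z _ => ?_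
        rw [_root_.map_smul, Matrix.mulVecLin_apply, hu z, smul_smul]
      have h2 : (x : ℂ) • v = ∑ z : ι, ((x : ℂ) * b.repr v z) • u z := by
        conv_lhs => rw [hv_sum, Finset.smul_sum]
        exact Finset.sum_congr rfl fun z _ => by rw [smul_smul]
      rw [← h1, ← h2, hv]
    have hcoef : ∀ z : ι, z ≠ l0 → b.repr v z = 0 := by
      intro z hz
      have hzero : ∑ w : ι, (b.repr v w * w - (x : ℂ) * b.repr v w) • u w = 0 := by
        rw [show (fun w : ι => (b.repr v w * w - (x : ℂ) * b.repr v w) • u w)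
          = fun w : ι => (b.repr v w * w) • u w - ((x : ℂ) * b.repr v w) • u w from
            funext fun w => sub_smul _ _ _, Finset.sum_sub_distrib, happ, sub_self]
      have := linearIndependent_iff'.mp hli Finset.univ
        (fun w => b.repr v w * w - (x : ℂ) * b.repr v w) hzero z (Finset.mem_univ z)
      have hne : (z : ℂ) ≠ (x : ℂ) := fun h => hz (Subtype.ext h)
      have : b.repr v z * ((z : ℂ) - (x : ℂ)) = 0 := by linear_combination this
      rcases mul_eq_zero.mp this with h | h
      · exact h
      · exact absurd (by linear_combination h) hne
    conv_lhs => rw [hv_sum]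
    rw [Finset.sum_eq_single l0 (fun z _ hz => by rw [hcoef z hz, zero_smul])
      (fun h => absurd (Finset.mem_univ _) h)]
  -- the quaternionic structure J
  have hJx : M *ᵥ qtmJ (u l0) = (x : ℂ) • qtmJ (u l0) := by
    rw [qtm_mulVec_J, hu l0]
    show qtmJ (((l0 : ℂ)) • u l0) = _
    rw [qtmJ_smul]
    congr 1
    simp [hl0, Complex.conj_ofReal]
  set w := qtmJ (u l0) with hw
  set c := b.repr w l0 with hcdef
  have hwc : w = c • u l0 := key w hJx
  have hJw : qtmJ w = -(u l0) := by rw [hw, qtmJ_J]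
  have hJw' : qtmJ w = ((starRingEnd ℂ) c * c) • u l0 := by
    conv_lhs => rw [hwc]
    rw [qtmJ_smul, ← hw, hwc, smul_smul]
  have hfinal : ((starRingEnd ℂ) c * c + 1) • u l0 = 0 := by
    rw [add_smul, one_smul, ← hJw', hJw]
    abel
  have hc1 : (starRingEnd ℂ) c * c + 1 = 0 :=
    (smul_eq_zero.mp hfinal).resolve_right (hu0 l0)
  have : ((Complex.normSq c : ℝ) : ℂ) = -1 := by
    rw [← Complex.mul_conj, mul_comm]
    linear_combination hc1
  have h2 : (Complex.normSq c : ℝ) = -1 := by exact_mod_cast this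
  have := Complex.normSq_nonneg c
  linarith

lemma qtm_forward {n : ℕ} (hn : 1 ≤ n) (p : Polynomial ℝ) (hmonic : p.Monic)
    (hdeg : p.natDegree = 2 * n)
    (hroots : (p.map (algebraMap ℝ ℂ)).roots.toFinset.card = 2 * n)
    (hnr : ∀ x : ℝ, p.eval x ≠ 0) :
    ∃ Q : Matrix (Fin n) (Fin n) (Quaternion ℝ), IsUnit Q ∧
      Matrix.charpoly (quatMatrixToMatrix Q) = p.map (algebraMap ℝ ℂ) := by
  classical
  set pm := p.map (algebraMap ℝ ℂ) with hpm
  have hpm_monic : pm.Monic := hmonic.map _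
  have hpm_deg : pm.natDegree = 2 * n := by rw [hpm, Monic.natDegree_map hmonic, hdeg]
  have hsplits : Splits pm := IsAlgClosed.splits pm
  have hcard : Multiset.card pm.roots = 2 * n := by
    rw [(splits_iff_card_roots).mp hsplits, hpm_deg]
  have hnodup : pm.roots.Nodup := by
    rw [← Multiset.toFinset_card_eq_card_iff_nodup, hroots, hcard]
  have heval : ∀ z : ℂ, pm.eval ((starRingEnd ℂ) z) = (starRingEnd ℂ) (pm.eval z) := by
    intro z
    have hcomp : (starRingEnd ℂ).comp (algebraMap ℝ ℂ) = algebraMap ℝ ℂ :=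
      RingHom.ext fun r => Complex.conj_ofReal r
    rw [hpm, eval_map, eval_map, Polynomial.hom_eval₂, hcomp]
  have him : ∀ z : ℂ, z ∈ pm.roots → z.im ≠ 0 := by
    intro z hz h0
    have hz' : pm.eval z = 0 := (mem_roots hpm_monic.ne_zero).mp hz
    have hzre : z = ((z.re : ℝ) : ℂ) := by
      apply Complex.ext <;> simp [h0]
    rw [hzre] at hz'
    have : ((z.re : ℝ) : ℂ) = algebraMap ℝ ℂ z.re := rfl
    rw [this, hpm, eval_map, Polynomial.eval₂_at_apply] at hz'
    exact hnr z.re (by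
      have := (map_eq_zero_iff (algebraMap ℝ ℂ)
        ((algebraMap ℝ ℂ).injective)).mp hz'
      exact this)
  have hconj : ∀ z : ℂ, z ∈ pm.roots → (starRingEnd ℂ) z ∈ pm.roots := by
    intro z hz
    rw [mem_roots hpm_monic.ne_zero] at hz ⊢
    show pm.eval _ = 0
    rw [heval, hz, map_zero]
  set S := pm.roots.toFinset.filter (fun z => 0 < z.im) with hS
  set T := pm.roots.toFinset.filter (fun z => z.im < 0) with hT
  have hmemS : ∀ z ∈ S, z ∈ pm.roots ∧ 0 < z.im := by
    intro z hz
    rw [hS, Finset.mem_filter, Multiset.mem_toFinset] at hz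
    exact hz
  have hST : T = S.image (starRingEnd ℂ) := by
    ext w
    rw [hT, Finset.mem_filter, Multiset.mem_toFinset, Finset.mem_image]
    constructor
    · rintro ⟨hw, hwim⟩
      refine ⟨(starRingEnd ℂ) w, ?_, Complex.conj_conj w⟩
      rw [hS, Finset.mem_filter, Multiset.mem_toFinset]
      exact ⟨hconj w hw, by simpa using by linarith [hwim]⟩
    · rintro ⟨s, hs, rfl⟩
      obtain ⟨hs1, hs2⟩ := hmemS s hs
      exact ⟨hconj s hs1, by simpa using by linarith⟩
  have hdisj : Disjoint S T := by
    rw [Finset.disjoint_left]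
    intro z hzS hzT
    rw [hS, Finset.mem_filter] at hzS
    rw [hT, Finset.mem_filter] at hzT
    linarith [hzS.2, hzT.2]
  have hunion : S ∪ T = pm.roots.toFinset := by
    ext z
    rw [Finset.mem_union, hS, hT, Finset.mem_filter, Finset.mem_filter]
    constructor
    · rintro (h | h) <;> exact h.1
    · intro h
      rcases lt_trichotomy z.im 0 with h1 | h1 | h1
      · exact Or.inr ⟨h, h1⟩
      · exact absurd h1 (him z (Multiset.mem_toFinset.mp h))
      · exact Or.inl ⟨h, h1⟩
  have hcardT : T.card = S.card := by
    rw [hST, Finset.card_image_of_injective _ (starRingEnd ℂ).injective]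
  have hcardS : S.card = n := by
    have := Finset.card_union_of_disjoint hdisj
    rw [hunion, hroots, hcardT] at this
    omega
  set e : Fin n ≃ {x // x ∈ S} := (Finset.equivFinOfCardEq hcardS).symm with he
  set z : Fin n → ℂ := fun i => ((e i : ℂ)) with hz
  have hzS : ∀ i, z i ∈ S := fun i => (e i).2
  have hzim : ∀ i, 0 < (z i).im := fun i => (hmemS _ (hzS i)).2
  set q : Fin n → Quaternion ℝ := fun i => ⟨(z i).re, (z i).im, 0, 0⟩ with hq
  have hq0 : ∀ i, q i ≠ 0 := by
    intro i h
    have := congrArg QuaternionAlgebra.imI h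
    simp [hq] at this
    exact absurd this (ne_of_gt (hzim i))
  refine ⟨Matrix.diagonal q, ?_, ?_⟩
  · refine ⟨⟨Matrix.diagonal q, Matrix.diagonal (fun i => (q i)⁻¹), ?_, ?_⟩, rfl⟩
    · rw [Matrix.diagonal_mul_diagonal]
      have : (fun i => q i * (q i)⁻¹) = fun _ => 1 := funext fun i => mul_inv_cancel₀ (hq0 i)
      rw [this, Matrix.diagonal_one]
    · rw [Matrix.diagonal_mul_diagonal]
      have : (fun i => (q i)⁻¹ * q i) = fun _ => 1 := funext fun i => inv_mul_cancel₀ (hq0 i)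
      rw [this, Matrix.diagonal_one]
  · set dd : Fin n × Fin 2 → ℂ :=
      fun pr => if pr.2 = 0 then z pr.1 else (starRingEnd ℂ) (z pr.1) with hdd
    have hΦ : quatMatrixToMatrix (Matrix.diagonal q) = Matrix.diagonal dd := by
      ext ⟨i, a⟩ ⟨j, b⟩
      by_cases hij : i = j
      · subst hij
        show quatToMatrix (Matrix.diagonal q i i) a b = _
        rw [Matrix.diagonal_apply_eq]
        fin_cases a <;> fin_cases b <;>
          simp [quatToMatrix, Matrix.diagonal_apply, hdd, hq, Complex.ext_iff]
      · show quatToMatrix (Matrix.diagonal q i j) a b = _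
        rw [Matrix.diagonal_apply_ne _ hij, Matrix.diagonal_apply_ne _ (by simp [hij])]
        fin_cases a <;> fin_cases b <;> simp [quatToMatrix, Complex.ext_iff] <;> exact ⟨rfl, rfl⟩
    rw [hΦ, qtm_charpoly_diagonal]
    -- RHS as a product over the roots
    have hprod : pm = ∏ w ∈ pm.roots.toFinset, (X - C w) := by
      conv_lhs => rw [hsplits.eq_prod_roots_of_monic hpm_monic]
      rw [Finset.prod_eq_multiset_prod]
      congr 1
      rw [Multiset.toFinset_val, Multiset.dedup_eq_self.mpr hnodup]
    rw [hprod, ← hunion, Finset.prod_union hdisj, hST,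
      Finset.prod_image (fun a _ b _ h => (starRingEnd ℂ).injective h)]
    rw [Fintype.prod_prod_type]
    have : ∀ i : Fin n, ∏ a : Fin 2, (X - C (dd (i, a)))
        = (X - C (z i)) * (X - C ((starRingEnd ℂ) (z i))) := by
      intro i
      rw [Fin.prod_univ_two]
      simp [hdd]
    rw [Finset.prod_congr rfl (fun i _ => this i), Finset.prod_mul_distrib]
    have h1 : ∏ i : Fin n, (X - C (z i)) = ∏ w ∈ S, (X - C w) := by
      rw [← Finset.prod_coe_sort S (fun w => X - C w)]
      exact Equiv.prod_comp e (fun s : {x // x ∈ S} => X - C (s : ℂ))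
    have h2 : ∏ i : Fin n, (X - C ((starRingEnd ℂ) (z i)))
        = ∏ w ∈ S, (X - C ((starRingEnd ℂ) w)) := by
      rw [← Finset.prod_coe_sort S (fun w => X - C ((starRingEnd ℂ) w))]
      exact Equiv.prod_comp e (fun s : {x // x ∈ S} => X - C ((starRingEnd ℂ) (s : ℂ)))
    rw [h1, h2]

end QtmHelpers

/-- **Transfer criterion for regular semisimple conjugacy classes** (Section 15 of the
paper, case `d = 2`). Let `n ≥ 1` and let `p` be a monic real polynomial of degree `2n`
having `2n` distinct complex roots. Then `p` has no real root if and only if there is an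
invertible `n × n` quaternionic matrix `Q` whose associated `2n × 2n` complex matrix `Φ(Q)`
has characteristic polynomial equal to `p` (viewed over `ℂ`). -/
theorem no_real_root_iff_charpoly_of_quaternionic {n : ℕ} (hn : 1 ≤ n)
    (p : Polynomial ℝ) (hmonic : p.Monic) (hdeg : p.natDegree = 2 * n)
    (hroots : (p.map (algebraMap ℝ ℂ)).roots.toFinset.card = 2 * n) :
    (∀ x : ℝ, p.eval x ≠ 0) ↔
      ∃ Q : Matrix (Fin n) (Fin n) (Quaternion ℝ), IsUnit Q ∧
        Matrix.charpoly (quatMatrixToMatrix Q) = p.map (algebraMap ℝ ℂ) := by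
  constructor
  · intro h
    exact qtm_forward hn p hmonic hdeg hroots h
  · rintro ⟨Q, -, hc⟩ x
    exact qtm_backward hn p hmonic hdeg hroots Q hc x
end

section
/- For every continuous group homomorphism ψ : ℍˣ → ℂˣ there exists a unique s ∈ ℂ such that ψ(q) = (normSq q)^s for all q ∈ ℍˣ. -/
open Complex intervalIntegral Quaternion

private lemma aux_hasDerivAt_exp_real (w : ℂ) (t : ℝ) :
    HasDerivAt (fun u : ℝ => Complex.exp (w * u)) (w * Complex.exp (w * t)) t := by
  have h1 : HasDerivAt (fun z : ℂ => Complex.exp (w * z)) (w * Complex.exp (w * t)) (t : ℂ) := by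
    simpa [mul_comm, Function.comp_def] using
      (Complex.hasDerivAt_exp (w * t)).comp (t : ℂ) ((hasDerivAt_id (t : ℂ)).const_mul w)
  simpa using h1.comp_ofReal

/-- Every continuous character of `(ℝ, +)` with values in `ℂ` is `t ↦ exp (w * t)`. -/
private lemma real_char_exp (χ : ℝ → ℂ) (hc : Continuous χ) (h0 : χ 0 = 1)
    (hm : ∀ a b, χ (a + b) = χ a * χ b) : ∃ w : ℂ, ∀ t, χ t = Complex.exp (w * t) := by
  set Φ : ℝ → ℂ := fun t => ∫ u in (0:ℝ)..t, χ u with hΦdef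
  have hΦd : ∀ b : ℝ, HasDerivAt Φ (χ b) b := fun b =>
    integral_hasDerivAt_right (hc.intervalIntegrable _ _)
      (hc.stronglyMeasurableAtFilter _ _) hc.continuousAt
  have key : ∀ t h : ℝ, Φ (t + h) - Φ t = χ t * Φ h := by
    intro t h
    have h1 : Φ t + ∫ u in t..(t + h), χ u = Φ (t + h) :=
      integral_add_adjacent_intervals (hc.intervalIntegrable _ _) (hc.intervalIntegrable _ _)
    have h2 : ∫ u in t..(t + h), χ u = ∫ u in (0:ℝ)..h, χ (t + u) := by
      rw [integral_comp_add_left (fun u => χ u) t, add_zero]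
    have h3 : ∫ u in (0:ℝ)..h, χ (t + u) = χ t * Φ h := by
      simp only [hm]
      rw [integral_const_mul]
    rw [← h1, h2, h3]; ring
  have hΦ0 : Φ 0 = 0 := integral_same
  have hd0 : HasDerivAt Φ 1 0 := h0 ▸ hΦd 0
  have hev : ∀ᶠ h in nhdsWithin (0:ℝ) {(0:ℝ)}ᶜ, slope Φ 0 h ≠ 0 :=
    (hasDerivAt_iff_tendsto_slope.mp hd0).eventually_ne one_ne_zero
  obtain ⟨h₀, hs, hne⟩ := (hev.and (self_mem_nhdsWithin : {(0:ℝ)}ᶜ ∈ _)).exists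
  have hΦh₀ : Φ h₀ ≠ 0 := by
    intro hz
    apply hs
    simp [slope, hz, hΦ0]
  have hχeq : χ = fun t => (Φ (t + h₀) - Φ t) * (Φ h₀)⁻¹ := by
    funext t
    field_simp [key t h₀]
    exact (key t h₀).symm
  set D : ℝ → ℂ := fun t => (χ (t + h₀) - χ t) * (Φ h₀)⁻¹ with hD
  have hχd : ∀ t, HasDerivAt χ (D t) t := by
    intro t
    rw [hχeq]
    have hshift : HasDerivAt (fun t : ℝ => Φ (t + h₀)) (χ (t + h₀)) t := by
      simpa [Function.comp_def] using (hΦd (id t + h₀)).scomp t ((hasDerivAt_id t).add_const h₀)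
    exact (hshift.sub (hΦd t)).mul_const _
  set w : ℂ := D 0 with hw
  have hχd' : ∀ t, HasDerivAt χ (χ t * w) t := by
    intro t
    have hA : HasDerivAt (fun u : ℝ => χ (t + u)) (D t) 0 := by
      simpa [Function.comp_def] using (hχd (t + id (0:ℝ))).scomp (0:ℝ) ((hasDerivAt_id (0:ℝ)).const_add t)
    have hB : HasDerivAt (fun u : ℝ => χ t * χ u) (χ t * w) 0 := (hχd 0).const_mul (χ t)
    have heq : (fun u : ℝ => χ (t + u)) = fun u : ℝ => χ t * χ u := funext fun u => hm t u
    rw [heq] at hA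
    rw [← hA.unique hB]
    exact hχd t
  refine ⟨w, fun t => ?_⟩
  have hg : ∀ t : ℝ, HasDerivAt (fun t : ℝ => χ t * Complex.exp (-w * t)) 0 t := by
    intro t
    have := (hχd' t).mul (aux_hasDerivAt_exp_real (-w) t)
    exact this.congr_deriv (by ring)
  have hconst : χ t * Complex.exp (-w * t) = χ 0 * Complex.exp (-w * 0) :=
    is_const_of_deriv_eq_zero (fun x => (hg x).differentiableAt)
      (fun x => (hg x).deriv) t 0
  simp only [h0, Complex.ofReal_zero, mul_zero, Complex.exp_zero, one_mul, mul_one] at hconst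
  have hexp : Complex.exp (-w * t) = (Complex.exp (w * t))⁻¹ := by
    rw [← Complex.exp_neg]; ring_nf
  rw [hexp] at hconst
  field_simp at hconst
  exact hconst

/-- Every quaternion is conjugate (by a nonzero quaternion) to its star. -/
private lemma quat_conj_aux (q : Quaternion ℝ) :
    ∃ c : Quaternion ℝ, c ≠ 0 ∧ c * q = star q * c := by
  by_cases h : q.imI = 0 ∧ q.imJ = 0
  · refine ⟨⟨0, 1, 0, 0⟩, ?_, ?_⟩
    · intro hc
      have := congrArg QuaternionAlgebra.imI hc
      simp at this
    · ext
      · erw [Quaternion.re_mul, Quaternion.re_mul]; simp [h.1, h.2]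
      · erw [Quaternion.imI_mul, Quaternion.imI_mul]; simp [h.1, h.2]
      · erw [Quaternion.imJ_mul, Quaternion.imJ_mul]; simp [h.1, h.2]
      · erw [Quaternion.imK_mul, Quaternion.imK_mul]; simp [h.1, h.2]
  · refine ⟨⟨0, q.imJ, -q.imI, 0⟩, ?_, ?_⟩
    · intro hc
      apply h
      constructor
      · have := congrArg QuaternionAlgebra.imJ hc; simpa using this
      · have := congrArg QuaternionAlgebra.imI hc; simpa using this
    · ext
      · erw [Quaternion.re_mul, Quaternion.re_mul]; simp <;> ring
      · erw [Quaternion.imI_mul, Quaternion.imI_mul]; simp <;> ring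
      · erw [Quaternion.imJ_mul, Quaternion.imJ_mul]; simp <;> ring
      · erw [Quaternion.imK_mul, Quaternion.imK_mul]; simp <;> ring

/-- **Characters of `ℍˣ = GL(1, ℍ)` factor through the reduced norm** (Sections 1.2 and 9.3
of the paper). For every continuous group homomorphism `ψ : ℍˣ → ℂˣ` there exists a unique
`s ∈ ℂ` such that `ψ q = (normSq q) ^ s` for all nonzero quaternions `q`, where
`r ^ s = exp (s * log r)` for a positive real `r`. -/
theorem characters_of_quaternion_units (ψ : (Quaternion ℝ)ˣ →* ℂˣ) (hψ : Continuous ψ) :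
    ∃! s : ℂ, ∀ q : (Quaternion ℝ)ˣ,
      (ψ q : ℂ) = ((Quaternion.normSq (q : Quaternion ℝ) : ℝ) : ℂ) ^ s := by
  have hval : Continuous (Units.val : (Quaternion ℝ)ˣ → Quaternion ℝ) :=
    Units.isEmbedding_val₀.continuous
  have hψc : Continuous fun q : (Quaternion ℝ)ˣ => (ψ q : ℂ) :=
    Units.isEmbedding_val₀.continuous.comp hψ
  have hnormpos : ∀ q : (Quaternion ℝ)ˣ, (0:ℝ) < normSq (q : Quaternion ℝ) := fun q =>
    lt_of_le_of_ne normSq_nonneg (Ne.symm (normSq_ne_zero.mpr q.ne_zero))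
  have hexp_ne : ∀ t : ℝ, ((Real.exp t : ℝ) : Quaternion ℝ) ≠ 0 := by
    intro t h
    exact Real.exp_ne_zero t (Quaternion.coe_injective (by simpa using h))
  set m : ℝ → (Quaternion ℝ)ˣ := fun t => Units.mk0 _ (hexp_ne t) with hm_def
  set χ : ℝ → ℂ := fun t => (ψ (m t) : ℂ) with hχdef
  have hmcont : Continuous m := by
    rw [Units.isEmbedding_val₀.continuous_iff]
    exact Quaternion.continuous_coe.comp Real.continuous_exp
  have hχc : Continuous χ := hψc.comp hmcont
  have hχ0 : χ 0 = 1 := by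
    have : m 0 = 1 := by
      apply Units.ext
      simp [hm_def]
    simp [hχdef, this]
  have hχm : ∀ a b, χ (a + b) = χ a * χ b := by
    intro a b
    have : m (a + b) = m a * m b := by
      apply Units.ext
      push_cast [hm_def, Real.exp_add]
      simp
    simp [hχdef, this, map_mul]
  obtain ⟨w, hw⟩ := real_char_exp χ hχc hχ0 hχm
  -- `ψ q ^ 2` only depends on the reduced norm
  have key : ∀ q : (Quaternion ℝ)ˣ,
      (ψ q : ℂ) * (ψ q : ℂ) = Complex.exp (w * Real.log (normSq (q : Quaternion ℝ))) := by
    intro q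
    obtain ⟨c, hc0, hcq⟩ := quat_conj_aux (q : Quaternion ℝ)
    set cu : (Quaternion ℝ)ˣ := Units.mk0 c hc0 with hcu
    have hconj : cu * q * cu⁻¹ = star q := by
      apply Units.ext
      rw [Units.val_mul, Units.val_mul, Units.val_inv_eq_inv_val, Units.coe_star]
      rw [hcu]
      show c * (q : Quaternion ℝ) * c⁻¹ = star (q : Quaternion ℝ)
      rw [hcq]
      rw [mul_inv_cancel_right₀ hc0]
    have hstar : ψ (star q) = ψ q := by
      rw [← hconj, map_mul, map_mul, map_inv, mul_comm (ψ cu) (ψ q), mul_inv_cancel_right]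
    have hsq : q * star q = m (Real.log (normSq (q : Quaternion ℝ))) := by
      apply Units.ext
      rw [Units.val_mul, Units.coe_star, Quaternion.self_mul_star]
      show _ = ((Real.exp (Real.log (normSq (q : Quaternion ℝ))) : ℝ) : Quaternion ℝ)
      rw [Real.exp_log (hnormpos q)]
    calc (ψ q : ℂ) * (ψ q : ℂ) = ((ψ q * ψ (star q) : ℂˣ) : ℂ) := by
          rw [hstar, Units.val_mul]
      _ = ((ψ (q * star q) : ℂˣ) : ℂ) := by rw [map_mul]
      _ = χ (Real.log (normSq (q : Quaternion ℝ))) := by rw [hsq]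
      _ = Complex.exp (w * Real.log (normSq (q : Quaternion ℝ))) := hw _
  set s : ℂ := w / 2 with hs
  -- the correction function with values in {1, -1}
  set G : (Quaternion ℝ)ˣ → ℂ := fun q =>
    (ψ q : ℂ) * Complex.exp (-s * (Real.log (normSq (q : Quaternion ℝ)) : ℂ)) with hG
  have hGsq : ∀ q, G q * G q = 1 := by
    intro q
    set L : ℂ := (Real.log (normSq (q : Quaternion ℝ)) : ℂ) with hL
    calc G q * G q
        = ((ψ q : ℂ) * (ψ q : ℂ)) * (Complex.exp (-s * L) * Complex.exp (-s * L)) := by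
          rw [hG]; ring
      _ = Complex.exp (w * L) * Complex.exp (-s * L + -s * L) := by
          rw [key q, ← Complex.exp_add, hL]
      _ = Complex.exp (w * L + (-s * L + -s * L)) := by rw [← Complex.exp_add]
      _ = 1 := by
          rw [show w * L + (-s * L + -s * L) = 0 by rw [hs]; ring, Complex.exp_zero]
  have hlogc : Continuous fun q : (Quaternion ℝ)ˣ => Real.log (normSq (q : Quaternion ℝ)) := by
    rw [continuous_iff_continuousAt]
    intro q
    have h1 : ContinuousAt (fun q : (Quaternion ℝ)ˣ => normSq (q : Quaternion ℝ)) q :=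
      (Quaternion.continuous_normSq.comp hval).continuousAt
    exact h1.log (hnormpos q).ne'
  have hGcont : Continuous G :=
    hψc.mul (Complex.continuous_exp.comp (continuous_const.mul
      (Complex.continuous_ofReal.comp hlogc)))
  -- `(Quaternion ℝ)ˣ` is connected
  have hpath : IsPathConnected ({(0 : Quaternion ℝ)}ᶜ) :=
    isPathConnected_compl_singleton_of_one_lt_rank
      (by rw [Quaternion.rank_eq_four]; norm_num) 0
  have hrange : Set.range (Units.val : (Quaternion ℝ)ˣ → Quaternion ℝ)
      = {(0 : Quaternion ℝ)}ᶜ := by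
    ext x
    simp only [Set.mem_range, Set.mem_compl_iff, Set.mem_singleton_iff]
    constructor
    · rintro ⟨u, rfl⟩; exact u.ne_zero
    · intro hx
      exact (isUnit_iff_ne_zero.mpr hx)
  haveI : ConnectedSpace ({(0 : Quaternion ℝ)}ᶜ : Set (Quaternion ℝ)) :=
    Subtype.connectedSpace hpath.isConnected
  haveI : ConnectedSpace (Quaternion ℝ)ˣ := by
    let e : (Quaternion ℝ)ˣ ≃ₜ Set.range (Units.val : (Quaternion ℝ)ˣ → Quaternion ℝ) :=
      Units.isEmbedding_val₀.toHomeomorph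
    let e2 := e.trans (Homeomorph.setCongr hrange)
    exact e2.symm.surjective.connectedSpace e2.symm.continuous
  -- dichotomy and clopen argument
  have hdich : ∀ q, G q = 1 ∨ G q = -1 := by
    intro q
    have h := hGsq q
    have h2 : (G q - 1) * (G q + 1) = 0 := by linear_combination h
    rcases mul_eq_zero.mp h2 with h' | h'
    · exact Or.inl (sub_eq_zero.mp h')
    · exact Or.inr (eq_neg_of_add_eq_zero_left h')
  have hSopen : G ⁻¹' {1} = G ⁻¹' ({(-1 : ℂ)}ᶜ) := by
    ext q
    simp only [Set.mem_preimage, Set.mem_singleton_iff, Set.mem_compl_iff]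
    constructor
    · intro h; rw [h]; norm_num
    · intro h
      rcases hdich q with h1 | h1
      · exact h1
      · exact absurd h1 h
  have hclopen : IsClopen (G ⁻¹' {1}) := by
    constructor
    · exact isClosed_singleton.preimage hGcont
    · rw [hSopen]
      exact (isClosed_singleton.isOpen_compl).preimage hGcont
  have hone : (1 : (Quaternion ℝ)ˣ) ∈ G ⁻¹' {1} := by
    simp only [Set.mem_preimage, Set.mem_singleton_iff, hG]
    have h1 : normSq ((1 : (Quaternion ℝ)ˣ) : Quaternion ℝ) = 1 := by
      simp
    rw [h1]
    simp
  have hall : ∀ q, G q = 1 := by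
    intro q
    have := hclopen.eq_univ ⟨1, hone⟩
    have hq : q ∈ G ⁻¹' {1} := this ▸ Set.mem_univ q
    exact hq
  -- the main formula
  have hmain : ∀ q : (Quaternion ℝ)ˣ,
      (ψ q : ℂ) = ((Quaternion.normSq (q : Quaternion ℝ) : ℝ) : ℂ) ^ s := by
    intro q
    set L : ℝ := Real.log (normSq (q : Quaternion ℝ)) with hLdef
    have hGq : (ψ q : ℂ) * Complex.exp (-s * (L : ℂ)) = 1 := hall q
    have hexpne : Complex.exp (-s * (L : ℂ)) ≠ 0 := Complex.exp_ne_zero _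
    have hψq : (ψ q : ℂ) = Complex.exp (s * (L : ℂ)) := by
      have h2 : (ψ q : ℂ) * (Complex.exp (-s * (L : ℂ)) * Complex.exp (s * (L : ℂ)))
          = Complex.exp (s * (L : ℂ)) := by
        rw [← mul_assoc, hGq, one_mul]
      rwa [← Complex.exp_add, show -s * (L : ℂ) + s * (L : ℂ) = 0 by ring,
        Complex.exp_zero, mul_one] at h2
    rw [hψq, Complex.cpow_def_of_ne_zero
      (Complex.ofReal_ne_zero.mpr (hnormpos q).ne'), ← Complex.ofReal_log (hnormpos q).le]
    rw [mul_comm]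
  refine ⟨s, hmain, ?_⟩
  intro s' hs'
  -- uniqueness
  have hfe : ∀ t : ℝ, Complex.exp ((2 * (s' - s)) * t) = 1 := by
    intro t
    have h1 := hs' (m t)
    have h2 := hmain (m t)
    have hns : normSq ((m t : (Quaternion ℝ)ˣ) : Quaternion ℝ) = Real.exp (2 * t) := by
      show normSq (((Real.exp t : ℝ) : Quaternion ℝ)) = _
      rw [Quaternion.normSq_coe, sq, ← Real.exp_add]
      ring_nf
    have hcpow : ∀ z : ℂ, ((normSq ((m t : (Quaternion ℝ)ˣ) : Quaternion ℝ) : ℝ) : ℂ) ^ z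
        = Complex.exp (z * (2 * t)) := by
      intro z
      rw [hns, Complex.cpow_def_of_ne_zero
        (Complex.ofReal_ne_zero.mpr (Real.exp_ne_zero _)),
        ← Complex.ofReal_log (Real.exp_pos _).le, Real.log_exp]
      push_cast
      ring_nf
    have h3 : Complex.exp (s * (2 * t)) = Complex.exp (s' * (2 * t)) := by
      rw [← hcpow s, ← hcpow s', ← h1, ← h2]
    rw [show (2 * (s' - s)) * (t : ℂ) = s' * (2 * t) - s * (2 * t) by ring,
      Complex.exp_sub, ← h3, div_self (Complex.exp_ne_zero _)]
  have hd1 : HasDerivAt (fun t : ℝ => Complex.exp ((2 * (s' - s)) * t))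
      ((2 * (s' - s)) * Complex.exp ((2 * (s' - s)) * (0:ℝ))) 0 :=
    aux_hasDerivAt_exp_real _ 0
  have heq : (fun t : ℝ => Complex.exp ((2 * (s' - s)) * t)) = fun _ : ℝ => (1 : ℂ) :=
    funext hfe
  rw [heq] at hd1
  have hd2 : HasDerivAt (fun _ : ℝ => (1 : ℂ)) 0 0 := hasDerivAt_const _ _
  have := hd1.unique hd2
  simp only [Complex.ofReal_zero, mul_zero, Complex.exp_zero, mul_one] at this
  have h4 : s' - s = 0 := by
    rcases mul_eq_zero.mp this with h | h
    · norm_num at h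
    · exact h
  exact sub_eq_zero.mp h4
end

section
/- Let R be a commutative ring, let n ≥ 2, and let M be an n×n matrix over R. Then det(M) · det(M°) = det(M₍₁,₁₎) · det(M₍ₙ,ₙ₎) − det(M₍₁,ₙ₎) · det(M₍ₙ,₁₎), where M° is the (n−2)×(n−2) matrix obtained from M by deleting its first and last rows and its first and last columns, and M₍ᵢ,ⱼ₎ is the (n−1)×(n−1) matrix obtained from M by deleting row i and column j (with indices 1 and n referring to the first and last row/column). -/
open Matrix

section aux
variable {R : Type*} [CommRing R]

lemma lc_det_col_zero {m : ℕ} (D : Matrix (Fin (m+1)) (Fin (m+1)) R) (c : R)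
    (h : ∀ i, D i 0 = if i = 0 then c else 0) :
    D.det = c * (D.submatrix Fin.succ Fin.succ).det := by
  rw [Matrix.det_succ_column_zero]
  rw [Finset.sum_eq_single 0]
  · simp [h, Fin.succAbove_zero]
  · intro i _ hi
    rw [h i, if_neg hi]; ring
  · simp

lemma lc_det_col_last {m : ℕ} (D : Matrix (Fin (m+1)) (Fin (m+1)) R) (c : R)
    (h : ∀ i, D i (Fin.last m) = if i = Fin.last m then c else 0) :
    D.det = c * (D.submatrix Fin.castSucc Fin.castSucc).det := by
  rw [Matrix.det_succ_column D (Fin.last m)]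
  rw [Finset.sum_eq_single (Fin.last m)]
  · rw [h, if_pos rfl, Fin.succAbove_last]
    have : (-1 : R) ^ ((Fin.last m : ℕ) + (Fin.last m : ℕ)) = 1 := by
      rw [← two_mul]; simp [pow_mul]
    rw [this]; ring
  · intro i _ hi
    rw [h i, if_neg hi]; ring
  · simp

/-- A matrix whose middle columns are standard basis vectors has determinant equal
to the 2×2 determinant of its corner entries. -/
lemma lc_det_middle {m : ℕ} (P : Matrix (Fin (m+2)) (Fin (m+2)) R)
    (h : ∀ (k : Fin m) (i : Fin (m+2)),
      P i (k.castSucc.succ) = if i = k.castSucc.succ then 1 else 0) :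
    P.det = P 0 0 * P (Fin.last (m+1)) (Fin.last (m+1))
      - P 0 (Fin.last (m+1)) * P (Fin.last (m+1)) 0 := by
  induction m with
  | zero =>
      rw [Matrix.det_fin_two]
      rfl
  | succ m ih =>
      -- expand along column 1 = (0 : Fin (m+1)).castSucc.succ
      have hc : ∀ i : Fin (m+3), P i 1 = if i = 1 then 1 else 0 := by
        intro i
        have := h 0 i
        have e : ((0 : Fin (m+1)).castSucc.succ : Fin (m+3)) = 1 := by ext; simp
        rw [e] at this
        exact this
      rw [Matrix.det_succ_column P 1]
      rw [Finset.sum_eq_single 1]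
      · rw [hc, if_pos rfl]
        have hsign : (-1 : R) ^ ((1 : Fin (m+3)) + (1 : Fin (m+3)) : ℕ) = 1 := by
          norm_num
        simp only [hsign, one_mul, mul_one]
        set Q := P.submatrix (Fin.succAbove 1) (Fin.succAbove 1) with hQ
        have hQmid : ∀ (k : Fin m) (i : Fin (m+2)),
            Q i (k.castSucc.succ) = if i = k.castSucc.succ then 1 else 0 := by
          intro k i
          have hmap : (1 : Fin (m+3)).succAbove (k.castSucc.succ)
              = ((k.succ : Fin (m+1)).castSucc).succ := by
            ext
            simp [Fin.succAbove, Fin.lt_def]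
          have hinj := Fin.succAbove_right_injective (p := (1 : Fin (m+3)))
          rw [hQ, Matrix.submatrix_apply, hmap, h k.succ]
          have hiff : ((1 : Fin (m+3)).succAbove i = ((k.succ : Fin (m+1)).castSucc).succ)
              ↔ (i = k.castSucc.succ) := by
            rw [← hmap]
            exact ⟨fun hh => hinj hh, fun hh => by rw [hh]⟩
          rcases Decidable.em (i = k.castSucc.succ) with he | he
          · rw [if_pos he, if_pos (hiff.mpr he)]
          · rw [if_neg he, if_neg (fun hh => he (hiff.mp hh))]
        have := ih Q hQmid
        rw [this]
        have h00 : Q 0 0 = P 0 0 := by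
          rw [hQ, Matrix.submatrix_apply]
          norm_num [Fin.succAbove, Fin.lt_def]
        have hll : Q (Fin.last (m+1)) (Fin.last (m+1)) = P (Fin.last (m+2)) (Fin.last (m+2)) := by
          rw [hQ, Matrix.submatrix_apply]
          congr 1
        have h0l : Q 0 (Fin.last (m+1)) = P 0 (Fin.last (m+2)) := by
          rw [hQ, Matrix.submatrix_apply]
          congr 1
        have hl0 : Q (Fin.last (m+1)) 0 = P (Fin.last (m+2)) 0 := by
          rw [hQ, Matrix.submatrix_apply]
          congr 1
        rw [h00, hll, h0l, hl0]
      · intro i _ hi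
        rw [hc, if_neg hi]; ring
      · simp

end aux

section key
variable {R : Type*} [CommRing R]

/-- The key identity before cancellation of `det A`. -/
lemma lc_key {n : ℕ} (A : Matrix (Fin (n + 2)) (Fin (n + 2)) R) :
    A.det * (A.det *
      (A.submatrix (fun i : Fin n => i.castSucc.succ) (fun j : Fin n => j.castSucc.succ)).det) =
    A.det * ((A.submatrix Fin.succ Fin.succ).det * (A.submatrix Fin.castSucc Fin.castSucc).det -
        (A.submatrix Fin.succ Fin.castSucc).det * (A.submatrix Fin.castSucc Fin.succ).det) := by
  classical
  set B : Matrix (Fin (n+2)) (Fin (n+2)) R := fun i j =>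
    if j = 0 then A.adjugate i 0
    else if j = Fin.last (n+1) then A.adjugate i (Fin.last (n+1))
    else if i = j then 1 else 0 with hB
  have hmid_ne0 : ∀ k : Fin n, (k.castSucc.succ : Fin (n+2)) ≠ 0 := fun k => Fin.succ_ne_zero _
  have hmid_nelast : ∀ k : Fin n, (k.castSucc.succ : Fin (n+2)) ≠ Fin.last (n+1) := by
    intro k hk
    have : (k : ℕ) + 1 = n + 1 := by
      have := congrArg Fin.val hk
      simpa using this
    omega
  -- entries of C = A * B
  have hC0 : ∀ i, (A * B) i 0 = if i = 0 then A.det else 0 := by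
    intro i
    have : (A * B) i 0 = (A * A.adjugate) i 0 := by
      simp only [Matrix.mul_apply]
      simp only [hB]
      refine Finset.sum_congr rfl fun k _ => ?_
      simp
    rw [this, Matrix.mul_adjugate]
    by_cases hi : i = 0 <;> simp [hi, Matrix.one_apply, eq_comm]
  have hClast : ∀ i, (A * B) i (Fin.last (n+1)) = if i = Fin.last (n+1) then A.det else 0 := by
    intro i
    have : (A * B) i (Fin.last (n+1)) = (A * A.adjugate) i (Fin.last (n+1)) := by
      simp only [Matrix.mul_apply]
      simp only [hB]
      refine Finset.sum_congr rfl fun k _ => ?_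
      have : (Fin.last (n+1) : Fin (n+2)) ≠ 0 := by
        simp [Fin.ext_iff]
      simp [this]
    rw [this, Matrix.mul_adjugate]
    by_cases hi : i = Fin.last (n+1) <;> simp [hi, Matrix.one_apply, eq_comm]
  have hCmid : ∀ (k : Fin n) (i : Fin (n+2)),
      (A * B) i (k.castSucc.succ) = A i (k.castSucc.succ) := by
    intro k i
    rw [Matrix.mul_apply]
    rw [Finset.sum_eq_single (k.castSucc.succ)]
    · simp [hB, hmid_ne0 k, hmid_nelast k]
    · intro b _ hb
      simp [hB, hmid_ne0 k, hmid_nelast k, hb]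
    · simp
  -- det (A * B) computed via column expansions
  have hdet1 : (A * B).det = A.det * ((A * B).submatrix Fin.succ Fin.succ).det :=
    lc_det_col_zero _ _ hC0
  have hdet2 : ((A * B).submatrix Fin.succ Fin.succ).det =
      A.det * (((A * B).submatrix Fin.succ Fin.succ).submatrix Fin.castSucc Fin.castSucc).det := by
    apply lc_det_col_last
    intro i
    rw [Matrix.submatrix_apply]
    have hsl : (Fin.last n).succ = Fin.last (n+1) := rfl
    rw [hsl, hClast]
    by_cases hi : i = Fin.last n
    · rw [if_pos hi, if_pos (by subst hi; exact hsl)]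
    · rw [if_neg hi, if_neg (fun hh => hi (Fin.succ_injective _ (by rw [hh]; rfl)))]
  have hinterior : (((A * B).submatrix Fin.succ Fin.succ).submatrix Fin.castSucc Fin.castSucc) =
      A.submatrix (fun i : Fin n => i.castSucc.succ) (fun j : Fin n => j.castSucc.succ) := by
    ext i j
    simp only [Matrix.submatrix_apply]
    exact hCmid j i.castSucc.succ
  -- det B via corner formula
  have hBmid : ∀ (k : Fin n) (i : Fin (n+2)),
      B i (k.castSucc.succ) = if i = k.castSucc.succ then 1 else 0 := by
    intro k i
    simp [hB, hmid_ne0 k, hmid_nelast k]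
  have hdetB : B.det = B 0 0 * B (Fin.last (n+1)) (Fin.last (n+1))
      - B 0 (Fin.last (n+1)) * B (Fin.last (n+1)) 0 := lc_det_middle B hBmid
  have hlast_ne0 : (Fin.last (n+1) : Fin (n+2)) ≠ 0 := by simp [Fin.ext_iff]
  have hB00 : B 0 0 = A.adjugate 0 0 := by simp [hB]
  have hBll : B (Fin.last (n+1)) (Fin.last (n+1)) = A.adjugate (Fin.last (n+1)) (Fin.last (n+1)) := by
    simp [hB, hlast_ne0]
  have hB0l : B 0 (Fin.last (n+1)) = A.adjugate 0 (Fin.last (n+1)) := by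
    simp [hB, hlast_ne0]
  have hBl0 : B (Fin.last (n+1)) 0 = A.adjugate (Fin.last (n+1)) 0 := by simp [hB]
  -- adjugate entries
  have hadj00 : A.adjugate 0 0 = (A.submatrix Fin.succ Fin.succ).det := by
    rw [Matrix.adjugate_fin_succ_eq_det_submatrix]
    simp [Fin.succAbove_zero]
  have hadjll : A.adjugate (Fin.last (n+1)) (Fin.last (n+1))
      = (A.submatrix Fin.castSucc Fin.castSucc).det := by
    rw [Matrix.adjugate_fin_succ_eq_det_submatrix]
    rw [Fin.succAbove_last]
    have : (-1 : R) ^ ((Fin.last (n+1) : ℕ) + (Fin.last (n+1) : ℕ)) = 1 := by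
      rw [← two_mul]; simp [pow_mul]
    rw [this, one_mul]
  have hadj0l : A.adjugate 0 (Fin.last (n+1))
      = (-1 : R) ^ (n+1) * (A.submatrix Fin.castSucc Fin.succ).det := by
    rw [Matrix.adjugate_fin_succ_eq_det_submatrix]
    rw [Fin.succAbove_last, Fin.succAbove_zero]
    norm_num [Fin.val_last]
  have hadjl0 : A.adjugate (Fin.last (n+1)) 0
      = (-1 : R) ^ (n+1) * (A.submatrix Fin.succ Fin.castSucc).det := by
    rw [Matrix.adjugate_fin_succ_eq_det_submatrix]
    rw [Fin.succAbove_last, Fin.succAbove_zero]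
    norm_num [Fin.val_last]
  have hdetB' : B.det =
      (A.submatrix Fin.succ Fin.succ).det * (A.submatrix Fin.castSucc Fin.castSucc).det -
        (A.submatrix Fin.succ Fin.castSucc).det * (A.submatrix Fin.castSucc Fin.succ).det := by
    rw [hdetB, hB00, hBll, hB0l, hBl0, hadj00, hadjll, hadj0l, hadjl0]
    have hs : (-1 : R) ^ (n+1) * (-1 : R) ^ (n+1) = 1 := by
      rw [← pow_add, ← two_mul]; simp [pow_mul]
    rw [mul_mul_mul_comm, hs, one_mul]
    ring
  calc A.det * (A.det *
      (A.submatrix (fun i : Fin n => i.castSucc.succ) (fun j : Fin n => j.castSucc.succ)).det)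
      = (A * B).det := by rw [hdet1, hdet2, hinterior]
    _ = A.det * B.det := Matrix.det_mul A B
    _ = _ := by rw [hdetB']

end key

section generic

private noncomputable def lcX (n : ℕ) :
    Matrix (Fin (n+2)) (Fin (n+2)) (MvPolynomial (Fin (n+2) × Fin (n+2)) ℤ) :=
  fun i j => MvPolynomial.X (i, j)

private lemma lc_detX_ne_zero (n : ℕ) : (lcX n).det ≠ 0 := by
  intro h
  have := congrArg (MvPolynomial.eval (fun p : Fin (n+2) × Fin (n+2) =>
    if p.1 = p.2 then (1 : ℤ) else 0)) h
  rw [RingHom.map_det, RingHom.mapMatrix_apply] at this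
  have hmap : (lcX n).map (MvPolynomial.eval (fun p : Fin (n+2) × Fin (n+2) =>
      if p.1 = p.2 then (1 : ℤ) else 0)) = (1 : Matrix _ _ ℤ) := by
    ext i j
    simp [lcX, Matrix.one_apply]
  rw [hmap] at this
  simp at this

private lemma lc_generic (n : ℕ) :
    (lcX n).det * ((lcX n).submatrix (fun i : Fin n => i.castSucc.succ)
        (fun j : Fin n => j.castSucc.succ)).det =
      ((lcX n).submatrix Fin.succ Fin.succ).det *
          ((lcX n).submatrix Fin.castSucc Fin.castSucc).det -
        ((lcX n).submatrix Fin.succ Fin.castSucc).det *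
          ((lcX n).submatrix Fin.castSucc Fin.succ).det := by
  have := lc_key (lcX n)
  exact mul_left_cancel₀ (lc_detX_ne_zero n) (by linear_combination this)

end generic


/-- **The Lewis Carroll identity (Dodgson condensation)** (used in Section 14 of the paper).
Let `R` be a commutative ring and let `M` be an `n × n` matrix over `R` with `n ≥ 2`
(written `n + 2` below). Then
`det M * det M° = det M₍₁,₁₎ * det M₍ₙ,ₙ₎ − det M₍₁,ₙ₎ * det M₍ₙ,₁₎`,
where `M°` deletes the first and last rows and columns of `M`, and `M₍ᵢ,ⱼ₎` deletes row `i`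
and column `j` (indices `1` and `n` meaning the first and last row/column). -/
theorem lewis_carroll_identity {R : Type*} [CommRing R] {n : ℕ}
    (M : Matrix (Fin (n + 2)) (Fin (n + 2)) R) :
    M.det *
        (M.submatrix (fun i : Fin n => i.castSucc.succ) (fun j : Fin n => j.castSucc.succ)).det =
      (M.submatrix Fin.succ Fin.succ).det * (M.submatrix Fin.castSucc Fin.castSucc).det -
        (M.submatrix Fin.succ Fin.castSucc).det * (M.submatrix Fin.castSucc Fin.succ).det := by
  let φ : MvPolynomial (Fin (n+2) × Fin (n+2)) ℤ →+* R :=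
    (MvPolynomial.eval₂Hom (Int.castRingHom R) (fun p => M p.1 p.2))
  have hM : (lcX n).map φ = M := by
    ext i j
    simp [lcX, φ]
  have key := congrArg φ (lc_generic n)
  have hsub : ∀ (m : ℕ) (f : Fin m → Fin (n+2)) (g : Fin m → Fin (n+2)),
      φ (((lcX n).submatrix f g).det) = (M.submatrix f g).det := by
    intro m f g
    rw [RingHom.map_det, RingHom.mapMatrix_apply]
    congr 1
    rw [← hM]
    rfl
  rw [map_sub, _root_.map_mul, _root_.map_mul, _root_.map_mul, RingHom.map_det, RingHom.mapMatrix_apply, hM,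
    hsub, hsub, hsub, hsub, hsub] at key
  exact key
end
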